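/- Let E : C → S be a conditional expectation between commutative von Neumann algebras (unital positive projection with module property), extended to id⊗E on M₂(ℂ)⊗C. If Z ∈ M₂(ℂ)⊗S and C ∈ C is self-adjoint, and if the state ω = ρ⊗φ is invariant under id⊗E, then ω(Z*(I⊗C²)Z) ≥ ω(Z*((id⊗E)(I⊗C))²Z). In particular, replacing a pointer C by its conditional expectation E[C|S] does not increase the added variance of the measurement M(B) = (id⊗φ)(Z* (I⊗B) Z). -/

import Mathlib

open scoped ComplexOrder

/-- Complete positivity of a linear endomorphism of a star-ordered C*-algebra. -/
def IsCompletelyPositive {N : Type*} [NormedRing N] [StarRing N] [NormedAlgebra ℂ N]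
    [PartialOrder N] [StarOrderedRing N] (E : N →ₗ[ℂ] N) : Prop :=
  ∀ (n : ℕ) (a b : Fin n → N),
    0 ≤ ∑ i, ∑ j, star (b i) * E (star (a i) * a j) * b j

/-- Conditional expectations do not increase the added variance: here `N` plays the
role of `M₂(ℂ) ⊗ C`, `E` the role of `id ⊗ E[·|S]` (a unital completely positive
projection with the module property onto `M₂(ℂ) ⊗ S`), `ω` the role of the
`E`-invariant state `ρ ⊗ φ`, `Z ∈ M₂(ℂ) ⊗ S` (i.e. `E Z = Z`) and `c = I ⊗ C`
a self-adjoint pointer. -/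
theorem stmt_14 {N : Type*} [NormedRing N] [StarRing N] [CStarRing N]
    [NormedAlgebra ℂ N] [StarModule ℂ N] [PartialOrder N] [StarOrderedRing N]
    (E : N →ₗ[ℂ] N) (hE1 : E 1 = 1) (hEcp : IsCompletelyPositive E)
    (hEproj : ∀ b : N, E (E b) = E b)
    (hEmod : ∀ a₁ a₂ b : N, E a₁ = a₁ → E a₂ = a₂ → E (a₁ * b * a₂) = a₁ * E b * a₂)
    (ω : N →ₗ[ℂ] ℂ) (hωpos : ∀ a : N, 0 ≤ ω (star a * a)) (hω1 : ω 1 = 1)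
    (hωinv : ∀ b : N, ω (E b) = ω b)
    (Z : N) (hZ : E Z = Z) (c : N) (hc : IsSelfAdjoint c) :
    ω (star Z * (E c) ^ 2 * Z) ≤ ω (star Z * c ^ 2 * Z) := by
  -- ω is positive on nonneg elements
  have hωmono : ∀ x : N, 0 ≤ x → 0 ≤ ω x := by
    intro x hx
    rw [StarOrderedRing.nonneg_iff] at hx
    induction hx using AddSubmonoid.closure_induction with
    | mem y hy => obtain ⟨s, rfl⟩ := hy; exact hωpos s
    | zero => simp
    | add a b _ _ ha hb => rw [map_add]; exact add_nonneg ha hb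
  -- E is positive
  have hEpos : ∀ x : N, 0 ≤ x → 0 ≤ E x := by
    intro x hx
    rw [StarOrderedRing.nonneg_iff] at hx
    induction hx using AddSubmonoid.closure_induction with
    | mem y hy =>
        obtain ⟨s, rfl⟩ := hy
        simpa using hEcp 1 (fun _ => s) (fun _ => 1)
    | zero => simp
    | add a b _ _ ha hb => rw [map_add]; exact add_nonneg ha hb
  -- the basic 2x2 positivity data
  have hTnn : ∀ (x : N) (lam : ℂ), 0 ≤ (1 : N) + lam • E x + (star lam) • E (star x)
      + (star lam * lam) • E (star x * x) := by
    intro x lam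
    have h := hEcp 2 ![1, x] ![1, lam • 1]
    simpa [Fin.sum_univ_two, mul_smul_comm, smul_mul_assoc, smul_smul, hE1, mul_comm, add_assoc] using h
  -- E preserves star
  have half : ∀ y : N, IsSelfAdjoint (y + y) → star y = y := by
    intro y h
    have h' : star y + star y = y + y := by simpa [star_add] using h.star_eq
    have h2 : (2:ℂ) • star y = (2:ℂ) • y := by rw [two_smul, two_smul]; exact h'
    have := congrArg (fun z => ((2:ℂ)⁻¹) • z) h2
    simpa [smul_smul] using this
  have hEstar : ∀ x : N, E (star x) = star (E x) := by
    intro x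
    set A := E x with hA
    set B := E (star x) with hB
    have h1 := (IsSelfAdjoint.of_nonneg (hTnn x 1)).sub (IsSelfAdjoint.of_nonneg (hTnn x (-1)))
    have e1 : ((1 : N) + (1:ℂ) • A + (star (1:ℂ)) • B + (star (1:ℂ) * 1) • E (star x * x))
        - ((1 : N) + (-1:ℂ) • A + (star (-1:ℂ)) • B + (star (-1:ℂ) * (-1)) • E (star x * x))
        = (A + B) + (A + B) := by
      simp only [star_one, star_neg]
      module
    rw [e1] at h1
    have s1 : star (A + B) = A + B := half _ h1
    have h2 := (IsSelfAdjoint.of_nonneg (hTnn x Complex.I)).sub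
      (IsSelfAdjoint.of_nonneg (hTnn x (-Complex.I)))
    have e2 : ((1 : N) + Complex.I • A + (star Complex.I) • B + (star Complex.I * Complex.I) • E (star x * x))
        - ((1 : N) + (-Complex.I) • A + (star (-Complex.I)) • B + (star (-Complex.I) * (-Complex.I)) • E (star x * x))
        = (Complex.I • (A - B)) + (Complex.I • (A - B)) := by
      simp only [Complex.star_def, Complex.conj_I, map_neg, neg_neg]
      module
    rw [e2] at h2
    have s2 : star (Complex.I • (A - B)) = Complex.I • (A - B) := half _ h2
    have s2' : star A - star B = B - A := by
      have : (-Complex.I) • (star A - star B) = Complex.I • (A - B) := by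
        simpa [star_smul, Complex.star_def, Complex.conj_I, star_sub] using s2
      have := congrArg (fun z => Complex.I • z) this
      simpa [smul_smul, Complex.I_mul_I] using this
    -- star A + star A = B + B
    have e3 : star A + star A = B + B := by
      have s1' : star A + star B = A + B := by simpa [star_add] using s1
      calc star A + star A = (star A + star B) + (star A - star B) := by abel
        _ = (A + B) + (B - A) := by rw [s1', s2']
        _ = B + B := by abel
    have h4 : (2:ℂ) • star A = (2:ℂ) • B := by rw [two_smul, two_smul]; exact e3
    have := congrArg (fun z => ((2:ℂ)⁻¹) • z) h4
    simp only [smul_smul] at this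
    rw [inv_mul_cancel₀ (two_ne_zero), one_smul, one_smul] at this
    rw [hB]; exact this.symm
  have hZstar : E (star Z) = star Z := by rw [hEstar, hZ]
  have hcs : star c = c := hc
  -- Kadison–Schwarz conjugated by Z
  have key : 0 ≤ star Z * E (c * c) * Z - star Z * (E c * E c) * Z := by
    have h := hEcp 2 ![c, 1] ![Z, -(E c * Z)]
    calc (0:N) ≤ _ := h
      _ = star Z * E (c * c) * Z - star Z * (E c * E c) * Z := by
        simp only [Fin.sum_univ_two, Matrix.cons_val_zero, Matrix.cons_val_one, Matrix.head_cons,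
          hcs, hE1, star_neg, star_mul, star_one, mul_one, one_mul, mul_neg, neg_mul]
        noncomm_ring
  have h1 : ω (star Z * (E c * E c) * Z) ≤ ω (star Z * E (c * c) * Z) := by
    have := hωmono _ key
    rw [map_sub] at this
    exact sub_nonneg.mp this
  have h2 : ω (star Z * E (c * c) * Z) = ω (star Z * (c * c) * Z) := by
    rw [← hEmod (star Z) Z (c * c) hZstar hZ, hωinv]
  rw [pow_two, pow_two]
  calc ω (star Z * (E c * E c) * Z) ≤ ω (star Z * E (c * c) * Z) := h1
    _ = ω (star Z * (c * c) * Z) := h2
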